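/- Let N ≥ 1 and let h : ℕ → ℤ/2ℤ be a 2N-periodic function. Then the function ĥ, defined on even positive integers by ĥ(m) = Σ_{k=1}^{v₂(m)} h(m/2^k), satisfies ĥ(m + 2N) = ĥ(m) for all even m ≥ 2 if and only if h is descendible 2N-periodic. -/

import Mathlib

open Polynomial

/-- `h : ℕ → ℤ/2ℤ` is `2N`-periodic (on positive integers). -/
def IsPeriodicTwoN (N : ℕ) (h : ℕ → ZMod 2) : Prop :=
  ∀ x, 1 ≤ x → h (x + 2 * N) = h x

/-- The set `T` associated to a `2N`-periodic function `h`: even `x ∈ [1,2N]` such that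
`#{k : 1 ≤ k ≤ v₂(x), h(x/2^k) = 1}` is odd. -/
def Tset (N : ℕ) (h : ℕ → ZMod 2) : Set ℕ :=
  {x | 1 ≤ x ∧ x ≤ 2 * N ∧ Even x ∧
    Odd (((Finset.Icc 1 (padicValNat 2 x)).filter (fun k => h (x / 2 ^ k) = 1)).card)}

/-- `h` is a descendible `2N`-periodic function. -/
def IsDescendible (N : ℕ) (h : ℕ → ZMod 2) : Prop :=
  IsPeriodicTwoN N h ∧
  ∀ x, 1 ≤ x → x ≤ N →
    ((2 * x ∈ Tset N h ∧ N + x ∈ Tset N h) → ¬ h (N + x) = 1) ∧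
    ((2 * x ∈ Tset N h ∧ N + x ∉ Tset N h) → h (N + x) = 1) ∧
    ((2 * x ∉ Tset N h ∧ N + x ∈ Tset N h) → h (N + x) = 1) ∧
    ((2 * x ∉ Tset N h ∧ N + x ∉ Tset N h) → ¬ h (N + x) = 1)

/-- `ĥ(m) = Σ_{k=1}^{v₂(m)} h(m/2^k)`. -/
def hhat (h : ℕ → ZMod 2) (m : ℕ) : ZMod 2 :=
  ∑ k ∈ Finset.Icc 1 (padicValNat 2 m), h (m / 2 ^ k)

/-- `h` is an essentially descendible `2N`-periodic function. -/
def IsEssDescendible (N : ℕ) (h : ℕ → ZMod 2) : Prop :=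
  ∃ g : ℕ → ZMod 2, IsDescendible N g ∧
    (∀ i, 2 * N + 1 ≤ i → h i = g i) ∧
    ∀ m, 1 ≤ m →
      (∑ k ∈ (Finset.range (2 * N + 1)).filter (fun k => 2 ^ k * m ≤ 2 * N), h (2 ^ k * m))
        = ∑ k ∈ (Finset.range (2 * N + 1)).filter (fun k => 2 ^ k * m ≤ 2 * N), g (2 ^ k * m)

lemma zmod2_self (a : ZMod 2) : a = if a = 1 then 1 else 0 := by
  revert a; decide

lemma cast_eq_one_iff_odd (n : ℕ) : (n : ZMod 2) = 1 ↔ Odd n := by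
  rw [Nat.odd_iff]
  constructor
  · intro hc
    by_contra hne
    have h0 : n % 2 = 0 := by omega
    rw [← ZMod.natCast_mod n 2, h0] at hc
    exact absurd hc (by decide)
  · intro hm
    rw [← ZMod.natCast_mod n 2, hm]
    norm_num

lemma sum_eq_card (s : Finset ℕ) (f : ℕ → ZMod 2) :
    ∑ k ∈ s, f k = ((s.filter (fun k => f k = 1)).card : ZMod 2) := by
  rw [← Finset.sum_boole]
  exact Finset.sum_congr rfl fun k _ => zmod2_self (f k)

lemma hhat_odd (h : ℕ → ZMod 2) (m : ℕ) (hm : Odd m) : hhat h m = 0 := by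
  have : padicValNat 2 m = 0 :=
    padicValNat.eq_zero_of_not_dvd (by rwa [Nat.odd_iff, ← Nat.two_dvd_ne_zero] at hm)
  simp [hhat, this]

lemma hhat_two_mul (h : ℕ → ZMod 2) (x : ℕ) (hx : 1 ≤ x) :
    hhat h (2 * x) = h x + hhat h x := by
  have hx0 : x ≠ 0 := by omega
  have hv : padicValNat 2 (2 * x) = padicValNat 2 x + 1 := by
    rw [padicValNat.mul (by norm_num) hx0, padicValNat.self (by norm_num)]
    ring
  unfold hhat
  rw [hv, ← Finset.Ico_add_one_right_eq_Icc, ← Finset.Ico_add_one_right_eq_Icc,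
    Finset.sum_Ico_eq_sum_range, Finset.sum_Ico_eq_sum_range]
  simp only [Nat.add_sub_cancel]
  rw [Finset.sum_range_succ']
  have e0 : 2 * x / 2 ^ (1 + 0) = x := by norm_num
  have ek : ∀ k, 2 * x / 2 ^ (1 + (k + 1)) = x / 2 ^ (1 + k) := by
    intro k
    have : (2:ℕ) ^ (1 + (k + 1)) = 2 * 2 ^ (1 + k) := by ring
    rw [this, Nat.mul_div_mul_left _ _ (by norm_num)]
  rw [e0, Finset.sum_congr rfl fun k _ => congrArg h (ek k)]
  ring

lemma mem_Tset_iff (N : ℕ) (h : ℕ → ZMod 2) (y : ℕ) (hy1 : 1 ≤ y) (hy2 : y ≤ 2 * N) :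
    y ∈ Tset N h ↔ hhat h y = 1 := by
  have hsum : hhat h y =
      (((Finset.Icc 1 (padicValNat 2 y)).filter (fun k => h (y / 2 ^ k) = 1)).card : ZMod 2) :=
    sum_eq_card _ _
  constructor
  · rintro ⟨-, -, -, hodd⟩
    rw [hsum, cast_eq_one_iff_odd]
    exact hodd
  · intro h1
    rw [hsum, cast_eq_one_iff_odd] at h1
    refine ⟨hy1, hy2, ?_, h1⟩
    by_contra hev
    have hodd : Odd y := Nat.not_even_iff_odd.mp hev
    have hv : padicValNat 2 y = 0 :=
      padicValNat.eq_zero_of_not_dvd (by rwa [Nat.odd_iff, ← Nat.two_dvd_ne_zero] at hodd)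
    rw [hv] at h1
    simp at h1

lemma descend_iff (N : ℕ) (hN : 1 ≤ N) (h : ℕ → ZMod 2) (x : ℕ) (hx1 : 1 ≤ x) (hxN : x ≤ N) :
    (((2 * x ∈ Tset N h ∧ N + x ∈ Tset N h) → ¬ h (N + x) = 1) ∧
     ((2 * x ∈ Tset N h ∧ N + x ∉ Tset N h) → h (N + x) = 1) ∧
     ((2 * x ∉ Tset N h ∧ N + x ∈ Tset N h) → h (N + x) = 1) ∧
     ((2 * x ∉ Tset N h ∧ N + x ∉ Tset N h) → ¬ h (N + x) = 1)) ↔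
    h (N + x) + hhat h (N + x) = h x + hhat h x := by
  rw [mem_Tset_iff N h (2 * x) (by omega) (by omega),
      mem_Tset_iff N h (N + x) (by omega) (by omega),
      hhat_two_mul h x hx1]
  generalize h x + hhat h x = a
  generalize hhat h (N + x) = b
  generalize h (N + x) = c
  revert a b c
  decide

theorem hhat_periodic_iff_descendible (N : ℕ) (hN : 1 ≤ N)
    (h : ℕ → ZMod 2) (hper : IsPeriodicTwoN N h) :
    (∀ m, 2 ≤ m → Even m → hhat h (m + 2 * N) = hhat h m) ↔ IsDescendible N h := by
  constructor
  · intro hP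
    refine ⟨hper, fun x hx1 hxN => ?_⟩
    rw [descend_iff N hN h x hx1 hxN]
    have key := hP (2 * x) (by omega) (even_two_mul x)
    have e : 2 * x + 2 * N = 2 * (N + x) := by ring
    rw [e, hhat_two_mul h (N + x) (by omega), hhat_two_mul h x hx1] at key
    exact key
  · intro hD
    have key : ∀ x, 1 ≤ x → h (N + x) + hhat h (N + x) = h x + hhat h x := by
      intro x
      induction x using Nat.strong_induction_on with
      | _ x ih =>
        intro hx1
        by_cases hxN : x ≤ N
        · exact (descend_iff N hN h x hx1 hxN).mp (hD.2 x hx1 hxN)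
        · set y := x - N with hy
          have hy1 : 1 ≤ y := by omega
          have hxy : x = y + N := by omega
          have hylt : y < x := by omega
          -- hhat (y + 2N) = hhat y
          have hhat_per : hhat h (y + 2 * N) = hhat h y := by
            rcases Nat.even_or_odd y with hev | hodd
            · obtain ⟨z, hz⟩ := hev
              have hz' : y = 2 * z := by omega
              have hz1 : 1 ≤ z := by omega
              have hzlt : z < x := by omega
              have e1 : y + 2 * N = 2 * (N + z) := by omega
              rw [e1, hz', hhat_two_mul h (N + z) (by omega), hhat_two_mul h z hz1]
              exact ih z hzlt hz1
            · have h1 : Odd (y + 2 * N) := by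
                rcases hodd with ⟨k, hk⟩; exact ⟨k + N, by omega⟩
              rw [hhat_odd h _ h1, hhat_odd h _ hodd]
          have hF2N : h (y + 2 * N) + hhat h (y + 2 * N) = h y + hhat h y := by
            rw [hD.1 y hy1, hhat_per]
          have e2 : N + x = y + 2 * N := by omega
          rw [e2, hF2N, hxy]
          rw [Nat.add_comm y N]
          exact (ih y hylt hy1).symm
    intro m hm hme
    obtain ⟨z, hz⟩ := hme
    have hz' : m = 2 * z := by omega
    have hz1 : 1 ≤ z := by omega
    have e : m + 2 * N = 2 * (N + z) := by omega
    rw [e, hz', hhat_two_mul h (N + z) (by omega), hhat_two_mul h z hz1]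
    exact key z hz1
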